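/- Let σ₁₂, σ₁₃, σ₂₃ ∈ ℝ and Λ ∈ ℝ, and set Σ₁ = σ₁₂ + σ₁₃ − σ₂₃, Σ₂ = σ₁₂ + σ₂₃ − σ₁₃, Σ₃ = σ₁₃ + σ₂₃ − σ₁₂. For φ, ψ ∈ ℝ set c = ((1+φ)/2)((1+ψ)/2), d = ((1−φ)/2)((1+ψ)/2), e = 1 − c − d, and define F = σ₁₂c²d² + e²(σ₁₃c² + σ₂₃d²) + c d e (Σ₁c + Σ₂d + Σ₃e) + Λ c²d²e². Then for all φ, ψ ∈ ℝ: F = (1/16)σ₁₂((1+ψ)/2)²(1−φ²)² + ((σ₁₃(1+φ) + σ₂₃(1−φ) − (1/2)σ₁₂(1−φ²))/32)(1−ψ²)² + (1/16)(1−φ²)(1−ψ²)((1+ψ)/2)²[σ₁₂ + (σ₁₃−σ₂₃)φ] − (1/64)σ₁₂(1−ψ²)((1+ψ)/2)((3+ψ)/2)(1−φ²)² + (1/256)Λ((1+ψ)/2)²(1−φ²)²(1−ψ²)². -/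
import Mathlib


/-- Under the change of variables
`c = ((1+φ)/2)((1+ψ)/2)`, `d = ((1−φ)/2)((1+ψ)/2)`, `e = 1 − c − d`, and with
spreading coefficients `S₁ = σ₁₂ + σ₁₃ − σ₂₃`, `S₂ = σ₁₂ + σ₂₃ − σ₁₃`,
`S₃ = σ₁₃ + σ₂₃ − σ₁₂`, the consistent triple-well potential
`F = σ₁₂c²d² + e²(σ₁₃c² + σ₂₃d²) + cde(S₁c + S₂d + S₃e) + Λc²d²e²`
equals the stated expression in the label variables `(φ, ψ)`. -/
theorem consistent_potential_change_of_variables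
    (σ₁₂ σ₁₃ σ₂₃ Λ S₁ S₂ S₃ : ℝ)
    (hS₁ : S₁ = σ₁₂ + σ₁₃ - σ₂₃) (hS₂ : S₂ = σ₁₂ + σ₂₃ - σ₁₃)
    (hS₃ : S₃ = σ₁₃ + σ₂₃ - σ₁₂) :
    ∀ φ ψ : ℝ,
      (fun c d e : ℝ =>
          σ₁₂ * c ^ 2 * d ^ 2 + e ^ 2 * (σ₁₃ * c ^ 2 + σ₂₃ * d ^ 2) +
            c * d * e * (S₁ * c + S₂ * d + S₃ * e) + Λ * c ^ 2 * d ^ 2 * e ^ 2)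
        ((1 + φ) / 2 * ((1 + ψ) / 2)) ((1 - φ) / 2 * ((1 + ψ) / 2))
        (1 - (1 + φ) / 2 * ((1 + ψ) / 2) - (1 - φ) / 2 * ((1 + ψ) / 2)) =
      1 / 16 * σ₁₂ * ((1 + ψ) / 2) ^ 2 * (1 - φ ^ 2) ^ 2 +
        (σ₁₃ * (1 + φ) + σ₂₃ * (1 - φ) - 1 / 2 * σ₁₂ * (1 - φ ^ 2)) / 32 *
          (1 - ψ ^ 2) ^ 2 +
        1 / 16 * (1 - φ ^ 2) * (1 - ψ ^ 2) * ((1 + ψ) / 2) ^ 2 *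
          (σ₁₂ + (σ₁₃ - σ₂₃) * φ) -
        1 / 64 * σ₁₂ * (1 - ψ ^ 2) * ((1 + ψ) / 2) * ((3 + ψ) / 2) *
          (1 - φ ^ 2) ^ 2 +
        1 / 256 * Λ * ((1 + ψ) / 2) ^ 2 * (1 - φ ^ 2) ^ 2 * (1 - ψ ^ 2) ^ 2 := by
  intro φ ψ; subst hS₁ hS₂ hS₃; simp only []; ring
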